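/- arXiv:1404.6032 — 2 statements merged into one kernel-verified Lean document; each statement's English description precedes it below -/
import Mathlib

section
/- The fat topology on M^d is admissible: each basic set F(a,r) is a bounded nc domain. Moreover the fat topology is finer than the free topology and coarser than the fine topology: for every J×J matrix δ of free polynomials and every x ∈ G_δ there exists ε > 0 with F(x,ε) ⊆ G_δ, and every fat open set is fine open. -/
open Matrix Filter Topology
open scoped Matrix.Norms.L2Operator Kronecker

noncomputable section

/-- `n × n` complex matrices, with the `L²` operator norm. -/
abbrev Mat (n : ℕ) : Type := Matrix (Fin n) (Fin n) ℂ

/-- `d`-tuples of `n × n` complex matrices, normed by the max of the operator norms. -/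
abbrev MatTup (d n : ℕ) : Type := Fin d → Mat n

/-- `M^d`, the disjoint union over all `n` of the `d`-tuples of `n × n` matrices. -/
abbrev MSpace (d : ℕ) : Type := Σ n : ℕ, MatTup d n

/-- Free (noncommutative) polynomials in `d` variables over `ℂ`. -/
abbrev FreePoly (d : ℕ) : Type := FreeAlgebra ℂ (Fin d)

/-- Evaluation of a free polynomial at a `d`-tuple of matrices. -/
def polyEval {d n : ℕ} (p : FreePoly d) (x : MatTup d n) : Mat n :=
  FreeAlgebra.lift ℂ (fun i => x i) p

/-- The (Fréchet) derivative of the evaluation of a free polynomial, `Dp(a)[h]`. -/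
def polyDeriv {d n : ℕ} (p : FreePoly d) (a h : MatTup d n) : Mat n :=
  fderiv ℂ (fun x : MatTup d n => polyEval p x) a h

/-- Assemble a `2 × 2` block matrix.  -/
def blk {n m : ℕ} (A : Matrix (Fin n) (Fin n) ℂ) (B : Matrix (Fin n) (Fin m) ℂ)
    (C : Matrix (Fin m) (Fin n) ℂ) (D : Matrix (Fin m) (Fin m) ℂ) : Mat (n + m) :=
  Matrix.reindex finSumFinEquiv finSumFinEquiv (Matrix.fromBlocks A B C D)

/-- Coordinatewise direct sum of tuples of matrices. -/
def dSum {d n m : ℕ} (x : MatTup d n) (y : MatTup d m) : MatTup d (n + m) :=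
  fun r => blk (x r) 0 0 (y r)

/-- Coordinatewise conjugation `s⁻¹ x s`. -/
def simConj {d n : ℕ} (s : Mat n) (x : MatTup d n) : MatTup d n :=
  fun r => s⁻¹ * x r * s

/-- An nc domain: a d.u. open subset of `M^d` closed under direct sums and unitary
conjugations. -/
structure IsNCDomain {d : ℕ} (Ω : Set (MSpace d)) : Prop where
  duOpen : ∀ n : ℕ, IsOpen {x : MatTup d n | (⟨n, x⟩ : MSpace d) ∈ Ω}
  dsum_mem : ∀ {n m : ℕ} (x : MatTup d n) (y : MatTup d m),
    (⟨n, x⟩ : MSpace d) ∈ Ω → (⟨m, y⟩ : MSpace d) ∈ Ω →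
    (⟨n + m, dSum x y⟩ : MSpace d) ∈ Ω
  unitary_mem : ∀ {n : ℕ} (u : Matrix.unitaryGroup (Fin n) ℂ) (x : MatTup d n),
    (⟨n, x⟩ : MSpace d) ∈ Ω → (⟨n, simConj (u : Mat n) x⟩ : MSpace d) ∈ Ω

/-- A d.u. open subset of `M^d`: each slice is open. -/
def DUOpen {d : ℕ} (U : Set (MSpace d)) : Prop :=
  ∀ n : ℕ, IsOpen {x : MatTup d n | (⟨n, x⟩ : MSpace d) ∈ U}

/-- An nc function on `Ω`: a graded function respecting direct sums and similarities. -/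
structure IsNCFunctionOn {d : ℕ} (Ω : Set (MSpace d)) (f : ∀ n, MatTup d n → Mat n) : Prop where
  dsum_eq : ∀ {n m : ℕ} (x : MatTup d n) (y : MatTup d m),
    (⟨n, x⟩ : MSpace d) ∈ Ω → (⟨m, y⟩ : MSpace d) ∈ Ω →
    (⟨n + m, dSum x y⟩ : MSpace d) ∈ Ω →
    f (n + m) (dSum x y) = blk (f n x) 0 0 (f m y)
  sim_eq : ∀ {n : ℕ} (s : Mat n) (x : MatTup d n), IsUnit s →
    (⟨n, x⟩ : MSpace d) ∈ Ω → (⟨n, simConj s x⟩ : MSpace d) ∈ Ω →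
    f n (simConj s x) = s⁻¹ * f n x * s

/-- A fine open set: a union of nc domains. -/
def FineOpen {d : ℕ} (U : Set (MSpace d)) : Prop :=
  ∀ x ∈ U, ∃ Ω : Set (MSpace d), IsNCDomain Ω ∧ x ∈ Ω ∧ Ω ⊆ U

/-- A fine holomorphic function: an nc function on a fine open set, locally bounded in
the fine topology. -/
def IsFineHolo {d : ℕ} (U : Set (MSpace d)) (f : ∀ n, MatTup d n → Mat n) : Prop :=
  FineOpen U ∧ IsNCFunctionOn U f ∧
    ∀ a ∈ U, ∃ Ω : Set (MSpace d), IsNCDomain Ω ∧ a ∈ Ω ∧ Ω ⊆ U ∧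
      ∃ C : ℝ, ∀ x ∈ Ω, ‖f x.1 x.2‖ ≤ C

/-- `a^{(k)}`, the direct sum of `k` copies of `a`. -/
def ampTup {d n : ℕ} (k : ℕ) (a : MatTup d n) : MatTup d (k * n) :=
  fun r => Matrix.reindex finProdFinEquiv finProdFinEquiv
    ((1 : Matrix (Fin k) (Fin k) ℂ) ⊗ₖ a r)

/-- The basic fat neighborhood `F(a,r)`: all unitary conjugates of points within `r`
of some `a^{(k)}`. -/
def FBall {d : ℕ} (a : MSpace d) (r : ℝ) : Set (MSpace d) :=
  {y | ∃ k : ℕ, 1 ≤ k ∧ ∃ x : MatTup d (k * a.1), ‖x - ampTup k a.2‖ < r ∧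
    ∃ u : Matrix.unitaryGroup (Fin (k * a.1)) ℂ,
      y = ⟨k * a.1, simConj (u : Mat (k * a.1)) x⟩}

/-- A fat open set. -/
def FatOpen {d : ℕ} (U : Set (MSpace d)) : Prop :=
  ∀ y ∈ U, ∃ ε : ℝ, 0 < ε ∧ FBall y ε ⊆ U

/-- A fat holomorphic function: an nc function on a fat open set, locally bounded in the
fat topology. -/
def IsFatHolo {d : ℕ} (U : Set (MSpace d)) (f : ∀ n, MatTup d n → Mat n) : Prop :=
  FatOpen U ∧ IsNCFunctionOn U f ∧
    ∀ a ∈ U, ∃ ε : ℝ, 0 < ε ∧ FBall a ε ⊆ U ∧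
      ∃ C : ℝ, ∀ x ∈ FBall a ε, ‖f x.1 x.2‖ ≤ C

/-- The Hessian `Hf(a)[h,k]`: the derivative in direction `k` of `x ↦ Df(x)[h]`. -/
def ncHess {d n : ℕ} (f : ∀ m, MatTup d m → Mat m) (a h k : MatTup d n) : Mat n :=
  fderiv ℂ (fun x : MatTup d n => fderiv ℂ (f n) x h) a k

/-- Join a `(d-k)`-tuple and a `k`-tuple into a `d`-tuple. -/
def joinTup {d k : ℕ} (hk : k ≤ d) {n : ℕ} (y : Fin (d - k) → Mat n) (z : Fin k → Mat n) :
    Fin d → Mat n :=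
  fun j => if hj : (j : ℕ) < d - k then y ⟨j, hj⟩
    else z ⟨(j : ℕ) - (d - k), by have := j.isLt; omega⟩

/-- A tuple `a` is broad if every matrix is a polynomial in `a`. -/
def Broad {d n : ℕ} (a : MatTup d n) : Prop :=
  ∀ M : Mat n, ∃ p : FreePoly d, polyEval p a = M

/-- The ampliation `id_k ⊗ L` of a map `L : M_n^d → M_n`, acting blockwise on
`M_{kn}^d` (identifying `M_{kn}` with `k × k` block matrices over `M_n`). -/
def ampFun {d n : ℕ} (L : MatTup d n → Mat n) (k : ℕ) (H : MatTup d (k * n)) : Mat (k * n) :=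
  fun p q =>
    L (fun r s t => H r (finProdFinEquiv ((finProdFinEquiv.symm p).1, s))
        (finProdFinEquiv ((finProdFinEquiv.symm q).1, t)))
      (finProdFinEquiv.symm p).2 (finProdFinEquiv.symm q).2

/-- The set of operator norms of right inverses of the ampliation `L_k`. -/
def RightInvVals {d n : ℕ} (L : MatTup d n → Mat n) (k : ℕ) : Set ℝ :=
  {c | ∃ S : Mat (k * n) →L[ℂ] MatTup d (k * n), (∀ Y, ampFun L k (S Y) = Y) ∧ ‖S‖ = c}

/-- `L` is completely nonsingular: every ampliation has a right inverse, and
`sup_k inf {‖R‖ : R right inverse of L_k} < ∞`. -/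
def CompletelyNonsingular {d n : ℕ} (L : MatTup d n → Mat n) : Prop :=
  (∀ k : ℕ, 1 ≤ k → (RightInvVals L k).Nonempty) ∧
    BddAbove {c : ℝ | ∃ k : ℕ, 1 ≤ k ∧ c = sInf (RightInvVals L k)}

/-- `c(L) = (sup_k inf {‖R‖ : R right inverse of L_k})⁻¹`. -/
def cConst {d n : ℕ} (L : MatTup d n → Mat n) : ℝ :=
  (sSup {c : ℝ | ∃ k : ℕ, 1 ≤ k ∧ c = sInf (RightInvVals L k)})⁻¹

/-- Evaluation of a `J × J` matrix of free polynomials at `x ∈ M_n^d`, as an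
`Jn × Jn` matrix. -/
def matPolyEval {d J n : ℕ} (δ : Matrix (Fin J) (Fin J) (FreePoly d)) (x : MatTup d n) :
    Matrix (Fin (J * n)) (Fin (J * n)) ℂ :=
  fun p q => polyEval (δ (finProdFinEquiv.symm p).1 (finProdFinEquiv.symm q).1) x
    (finProdFinEquiv.symm p).2 (finProdFinEquiv.symm q).2

/-- The basic free open set `G_δ = {x : ‖δ(x)‖ < 1}`. -/
def GSet {d J : ℕ} (δ : Matrix (Fin J) (Fin J) (FreePoly d)) : Set (MSpace d) :=
  {x | ‖matPolyEval δ x.2‖ < 1}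

/-- The linear map `Γ ↦ aΓ - Γa` from `M_n` to `M_n^d`. -/
def commMap {d n : ℕ} (a : MatTup d n) : Mat n →ₗ[ℂ] MatTup d n where
  toFun := fun Γ => fun r => a r * Γ - Γ * a r
  map_add' := by
    intro Γ₁ Γ₂
    funext r
    simp only [Matrix.mul_add, Matrix.add_mul, Pi.add_apply]
    abel
  map_smul' := by
    intro c Γ
    funext r
    simp [Matrix.mul_smul, Matrix.smul_mul, smul_sub]

/-- The subspace `{aΓ - Γa : Γ ∈ M_n}` of `M_n^d`. -/
def commSubspace {d n : ℕ} (a : MatTup d n) : Submodule ℂ (MatTup d n) :=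
  LinearMap.range (commMap a)

end


section AuxProofs
open Matrix Real
set_option linter.unusedSectionVars false

section NormCore
variable {m n m' n' : Type*} [Fintype m] [Fintype n] [Fintype m'] [Fintype n']
  [DecidableEq m] [DecidableEq n] [DecidableEq m'] [DecidableEq n']

lemma sqrt_mulVec_le (M : Matrix m n ℂ) (v : n → ℂ) :
    √(∑ p, ‖M.mulVec v p‖ ^ 2) ≤ ‖M‖ * √(∑ q, ‖v q‖ ^ 2) := by
  have h := M.l2_opNorm_mulVec ((WithLp.equiv 2 (n → ℂ)).symm v)
  rw [EuclideanSpace.norm_eq, EuclideanSpace.norm_eq] at h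
  exact h

lemma sum_sq_mulVec_le (M : Matrix m n ℂ) (v : n → ℂ) :
    ∑ p, ‖M.mulVec v p‖ ^ 2 ≤ ‖M‖ ^ 2 * ∑ q, ‖v q‖ ^ 2 := by
  have h := sqrt_mulVec_le M v
  have h0 : (0:ℝ) ≤ ∑ p, ‖M.mulVec v p‖ ^ 2 := by positivity
  have h1 : (0:ℝ) ≤ ∑ q, ‖v q‖ ^ 2 := by positivity
  calc ∑ p, ‖M.mulVec v p‖ ^ 2 = (√(∑ p, ‖M.mulVec v p‖ ^ 2)) ^ 2 := (Real.sq_sqrt h0).symm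
    _ ≤ (‖M‖ * √(∑ q, ‖v q‖ ^ 2)) ^ 2 := by
        apply pow_le_pow_left₀ (Real.sqrt_nonneg _) h
    _ = ‖M‖ ^ 2 * ∑ q, ‖v q‖ ^ 2 := by rw [mul_pow, Real.sq_sqrt h1]

lemma opNorm_le_of_sq (M : Matrix m n ℂ) {C : ℝ} (hC : 0 ≤ C)
    (h : ∀ v : n → ℂ, ∑ p, ‖M.mulVec v p‖ ^ 2 ≤ C ^ 2 * ∑ q, ‖v q‖ ^ 2) : ‖M‖ ≤ C := by
  rw [Matrix.l2_opNorm_def]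
  refine ContinuousLinearMap.opNorm_le_bound _ hC fun x => ?_
  have key : √(∑ p, ‖M.mulVec x p‖ ^ 2) ≤ C * √(∑ q, ‖x q‖ ^ 2) := by
    have h2 := Real.sqrt_le_sqrt (h x)
    rwa [Real.sqrt_mul (sq_nonneg C), Real.sqrt_sq hC] at h2
  exact le_of_eq_of_le (EuclideanSpace.norm_eq _)
    (le_of_le_of_eq key (by rw [EuclideanSpace.norm_eq]))
end NormCore

set_option linter.unusedSectionVars false

section NormCore2
variable {m n m' n' : Type*} [Fintype m] [Fintype n] [Fintype m'] [Fintype n']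
  [DecidableEq m] [DecidableEq n] [DecidableEq m'] [DecidableEq n']

lemma mulVec_submatrix (M : Matrix m n ℂ) (e₁ : m' ≃ m) (e₂ : n' ≃ n) (v : n' → ℂ) :
    (M.submatrix e₁ e₂).mulVec v = fun p => M.mulVec (v ∘ e₂.symm) (e₁ p) := by
  funext p
  simp only [Matrix.mulVec, dotProduct, Matrix.submatrix_apply]
  exact Fintype.sum_equiv e₂ _ _ (fun q => by simp)

lemma l2_opNorm_submatrix_le (M : Matrix m n ℂ) (e₁ : m' ≃ m) (e₂ : n' ≃ n) :
    ‖M.submatrix e₁ e₂‖ ≤ ‖M‖ := by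
  refine opNorm_le_of_sq _ (norm_nonneg M) fun v => ?_
  rw [mulVec_submatrix]
  have h1 : ∑ p, ‖M.mulVec (v ∘ e₂.symm) (e₁ p)‖ ^ 2 = ∑ p, ‖M.mulVec (v ∘ e₂.symm) p‖ ^ 2 :=
    Fintype.sum_equiv e₁ _ _ fun p => rfl
  have h2 : ∑ q, ‖(v ∘ e₂.symm) q‖ ^ 2 = ∑ q, ‖v q‖ ^ 2 :=
    Fintype.sum_equiv e₂.symm _ _ fun q => rfl
  rw [h1]
  calc ∑ p, ‖M.mulVec (v ∘ e₂.symm) p‖ ^ 2 ≤ ‖M‖ ^ 2 * ∑ q, ‖(v ∘ e₂.symm) q‖ ^ 2 :=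
        sum_sq_mulVec_le M _
    _ = ‖M‖ ^ 2 * ∑ q, ‖v q‖ ^ 2 := by rw [h2]

lemma l2_opNorm_submatrix (M : Matrix m n ℂ) (e₁ : m' ≃ m) (e₂ : n' ≃ n) :
    ‖M.submatrix e₁ e₂‖ = ‖M‖ := by
  refine le_antisymm (l2_opNorm_submatrix_le M e₁ e₂) ?_
  have := l2_opNorm_submatrix_le (M.submatrix e₁ e₂) e₁.symm e₂.symm
  rwa [Matrix.submatrix_submatrix, Equiv.self_comp_symm, Equiv.self_comp_symm,
    Matrix.submatrix_id_id] at this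

lemma norm_unitary_mul (U : Matrix m m ℂ) (hU : star U * U = 1) (A : Matrix m n ℂ) :
    ‖U * A‖ = ‖A‖ := by
  have h1 : ‖U * A‖ * ‖U * A‖ = ‖A‖ * ‖A‖ := by
    rw [← Matrix.l2_opNorm_conjTranspose_mul_self (U * A),
      ← Matrix.l2_opNorm_conjTranspose_mul_self A]
    congr 1
    rw [Matrix.conjTranspose_mul, Matrix.mul_assoc, ← Matrix.mul_assoc Uᴴ U A,
      ← Matrix.star_eq_conjTranspose U, hU, Matrix.one_mul]
  exact mul_self_inj (norm_nonneg _) (norm_nonneg _) |>.mp h1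

lemma norm_mul_unitary (A : Matrix m n ℂ) (U : Matrix n n ℂ) (hU : U * star U = 1) :
    ‖A * U‖ = ‖A‖ := by
  rw [← Matrix.l2_opNorm_conjTranspose (A * U), Matrix.conjTranspose_mul,
    ← Matrix.l2_opNorm_conjTranspose A]
  have h3 : star Uᴴ * Uᴴ = 1 := by
    rw [Matrix.star_eq_conjTranspose, Matrix.conjTranspose_conjTranspose]
    simpa [Matrix.star_eq_conjTranspose] using hU
  exact norm_unitary_mul Uᴴ h3 Aᴴ

lemma norm_one_le_mat : ‖(1 : Matrix m m ℂ)‖ ≤ 1 := by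
  rw [Matrix.cstar_norm_def, _root_.map_one, ContinuousLinearMap.one_def]
  exact ContinuousLinearMap.norm_id_le

lemma norm_conj_unitary (U : Matrix m m ℂ) (hU : U ∈ Matrix.unitaryGroup m ℂ)
    (A : Matrix m m ℂ) : ‖U⁻¹ * A * U‖ = ‖A‖ := by
  have h1 : star U * U = 1 := (Matrix.mem_unitaryGroup_iff'.mp hU)
  have h2 : U * star U = 1 := (Matrix.mem_unitaryGroup_iff.mp hU)
  have hinv : U⁻¹ = star U := Matrix.inv_eq_left_inv h1
  rw [hinv, norm_mul_unitary _ U h2, norm_unitary_mul (star U) (by rwa [star_star]) A]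
end NormCore2

section BlockOf
variable {J n : Type*} [Fintype J] [Fintype n] [DecidableEq J] [DecidableEq n]

def blockOf (f : J → J → Matrix n n ℂ) : Matrix (J × n) (J × n) ℂ :=
  fun p q => f p.1 q.1 p.2 q.2

def diagB (f : J → Matrix n n ℂ) : Matrix (J × n) (J × n) ℂ :=
  (Matrix.blockDiagonal f).submatrix (Equiv.prodComm J n) (Equiv.prodComm J n)

lemma diagB_apply (f : J → Matrix n n ℂ) (p q : J × n) :
    diagB f p q = if p.1 = q.1 then f p.1 p.2 q.2 else 0 := by
  simp [diagB, Matrix.blockDiagonal_apply]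

lemma blockOf_mul (f g : J → J → Matrix n n ℂ) :
    blockOf f * blockOf g = blockOf (fun j j' => ∑ l, f j l * g l j') := by
  ext ⟨j, s⟩ ⟨j', t⟩
  simp only [blockOf, Matrix.mul_apply, Matrix.sum_apply, Fintype.sum_prod_type]

lemma blockOf_sub (f g : J → J → Matrix n n ℂ) :
    blockOf f - blockOf g = blockOf (fun j j' => f j j' - g j j') := by
  ext ⟨j, s⟩ ⟨j', t⟩
  simp [blockOf]

lemma diagB_mul_diagB (f g : J → Matrix n n ℂ) :
    diagB f * diagB g = diagB (fun j => f j * g j) := by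
  rw [diagB, diagB, Matrix.submatrix_mul_equiv, ← Matrix.blockDiagonal_mul, diagB]

lemma diagB_star (f : J → Matrix n n ℂ) :
    star (diagB f) = diagB (fun j => star (f j)) := by
  rw [diagB, Matrix.star_eq_conjTranspose, Matrix.conjTranspose_submatrix,
    Matrix.blockDiagonal_conjTranspose, diagB]
  rfl

lemma diagB_one : diagB (fun _ : J => (1 : Matrix n n ℂ)) = 1 := by
  rw [diagB, show (fun _ : J => (1 : Matrix n n ℂ)) = (1 : J → Matrix n n ℂ) from rfl,
    Matrix.blockDiagonal_one, Matrix.submatrix_one_equiv]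

lemma diagB_mem_unitary (u : Matrix n n ℂ) (hu : u ∈ Matrix.unitaryGroup n ℂ) :
    diagB (fun _ : J => u) ∈ Matrix.unitaryGroup (J × n) ℂ := by
  rw [Matrix.mem_unitaryGroup_iff, diagB_star, diagB_mul_diagB]
  have h : (fun j : J => u * star u) = fun _ : J => (1 : Matrix n n ℂ) := by
    funext j; exact Matrix.mem_unitaryGroup_iff.mp hu
  rw [h, diagB_one]

lemma diagB_mul_blockOf (g : J → Matrix n n ℂ) (f : J → J → Matrix n n ℂ) :
    diagB g * blockOf f = blockOf (fun j j' => g j * f j j') := by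
  ext ⟨j, s⟩ ⟨j', t⟩
  rw [Matrix.mul_apply, Fintype.sum_prod_type]
  simp only [diagB_apply, blockOf, ite_mul, zero_mul]
  rw [Finset.sum_comm]
  simp only [Finset.sum_ite_eq, Finset.mem_univ, if_true]
  exact (Matrix.mul_apply (M := g j) (N := f j j')).symm

lemma blockOf_mul_diagB (f : J → J → Matrix n n ℂ) (g : J → Matrix n n ℂ) :
    blockOf f * diagB g = blockOf (fun j j' => f j j' * g j') := by
  ext ⟨j, s⟩ ⟨j', t⟩
  rw [Matrix.mul_apply, Fintype.sum_prod_type]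
  simp only [diagB_apply, blockOf, mul_ite, mul_zero]
  rw [Finset.sum_comm]
  simp only [Finset.sum_ite_eq', Finset.mem_univ, if_true]
  exact (Matrix.mul_apply (M := f j j') (N := g j')).symm

lemma blockOf_conj (u : Matrix n n ℂ) (f : J → J → Matrix n n ℂ) :
    diagB (fun _ : J => star u) * blockOf f * diagB (fun _ : J => u)
      = blockOf (fun j j' => star u * f j j' * u) := by
  rw [diagB_mul_blockOf, blockOf_mul_diagB]

lemma diagB_mulVec (f : J → Matrix n n ℂ) (v : J × n → ℂ) (j : J) (s : n) :
    (diagB f).mulVec v (j, s) = (f j).mulVec (fun t => v (j, t)) s := by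
  simp only [Matrix.mulVec, dotProduct, Fintype.sum_prod_type, diagB_apply, ite_mul, zero_mul]
  rw [Finset.sum_comm]
  simp only [Finset.sum_ite_eq, Finset.mem_univ, if_true]

lemma norm_diagB_le (f : J → Matrix n n ℂ) {C : ℝ} (hC : 0 ≤ C) (h : ∀ j, ‖f j‖ ≤ C) :
    ‖diagB f‖ ≤ C := by
  refine opNorm_le_of_sq _ hC fun v => ?_
  calc ∑ p : J × n, ‖(diagB f).mulVec v p‖ ^ 2
      = ∑ j, ∑ s, ‖(f j).mulVec (fun t => v (j, t)) s‖ ^ 2 := by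
        rw [Fintype.sum_prod_type]
        exact Finset.sum_congr rfl fun j _ => Finset.sum_congr rfl fun s _ => by
          rw [diagB_mulVec]
    _ ≤ ∑ j, ‖f j‖ ^ 2 * ∑ t, ‖v (j, t)‖ ^ 2 :=
        Finset.sum_le_sum fun j _ => sum_sq_mulVec_le (f j) _
    _ ≤ ∑ j, C ^ 2 * ∑ t, ‖v (j, t)‖ ^ 2 :=
        Finset.sum_le_sum fun j _ => by
          apply mul_le_mul_of_nonneg_right _ (by positivity)
          exact pow_le_pow_left₀ (norm_nonneg _) (h j) 2
    _ = C ^ 2 * ∑ q : J × n, ‖v q‖ ^ 2 := by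
        rw [← Finset.mul_sum, Fintype.sum_prod_type]

end BlockOf

section BlockOf2
variable {J n : Type*} [Fintype J] [Fintype n] [DecidableEq J] [DecidableEq n]

lemma single_apply (j0 j0' : J) (B : Matrix n n ℂ) (p q : J × n) :
    blockOf (fun j j' : J => if j = j0 ∧ j' = j0' then B else 0) p q
      = if p.1 = j0 ∧ q.1 = j0' then B p.2 q.2 else 0 := by
  by_cases h : p.1 = j0 ∧ q.1 = j0' <;> simp [blockOf, h]

lemma single_mulVec (j0 j0' : J) (B : Matrix n n ℂ) (v : J × n → ℂ) (j : J) (s : n) :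
    (blockOf (fun j j' : J => if j = j0 ∧ j' = j0' then B else 0)).mulVec v (j, s)
      = if j = j0 then B.mulVec (fun t => v (j0', t)) s else 0 := by
  simp only [Matrix.mulVec, dotProduct, Fintype.sum_prod_type, _root_.single_apply, ite_mul, zero_mul]
  by_cases h : j = j0
  · subst h
    simp only [true_and]
    rw [Finset.sum_comm]
    simp [Finset.sum_ite_eq', Matrix.mulVec, dotProduct]
  · simp [h]

lemma norm_single_le (j0 j0' : J) (B : Matrix n n ℂ) :
    ‖blockOf (fun j j' : J => if j = j0 ∧ j' = j0' then B else 0)‖ ≤ ‖B‖ := by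
  refine opNorm_le_of_sq _ (norm_nonneg B) fun v => ?_
  have hj : ∀ j : J, ∑ s, ‖(blockOf (fun j j' : J => if j = j0 ∧ j' = j0' then B else 0)).mulVec v (j, s)‖ ^ 2
      = if j = j0 then ∑ s, ‖B.mulVec (fun t => v (j0', t)) s‖ ^ 2 else 0 := fun j => by
    by_cases h : j = j0
    · subst h; simp [_root_.single_mulVec]
    · simp [_root_.single_mulVec, h]
  have key : ∑ p : J × n, ‖(blockOf (fun j j' : J => if j = j0 ∧ j' = j0' then B else 0)).mulVec v p‖ ^ 2
      = ∑ s, ‖B.mulVec (fun t => v (j0', t)) s‖ ^ 2 := by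
    rw [Fintype.sum_prod_type]
    simp only [hj]
    simp [Finset.sum_ite_eq]
  rw [key]
  calc ∑ s, ‖B.mulVec (fun t => v (j0', t)) s‖ ^ 2
      ≤ ‖B‖ ^ 2 * ∑ t, ‖v (j0', t)‖ ^ 2 := sum_sq_mulVec_le B _
    _ ≤ ‖B‖ ^ 2 * ∑ q : J × n, ‖v q‖ ^ 2 := by
        apply mul_le_mul_of_nonneg_left _ (by positivity)
        rw [Fintype.sum_prod_type]
        exact Finset.single_le_sum (f := fun j => ∑ t, ‖v (j, t)‖ ^ 2)
          (fun j _ => by positivity) (Finset.mem_univ j0')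

lemma blockOf_eq_sum_single (f : J → J → Matrix n n ℂ) :
    blockOf f = ∑ j0, ∑ j0', blockOf (fun j j' : J => if j = j0 ∧ j' = j0' then f j0 j0' else 0) := by
  ext ⟨j, s⟩ ⟨j', t⟩
  simp only [Matrix.sum_apply, _root_.single_apply]
  simp [Finset.sum_ite_eq', Finset.sum_ite_eq, ite_and]
  rfl

lemma norm_blockOf_le_sum (f : J → J → Matrix n n ℂ) :
    ‖blockOf f‖ ≤ ∑ j0, ∑ j0', ‖f j0 j0'‖ := by
  rw [blockOf_eq_sum_single]
  refine le_trans (norm_sum_le _ _) (Finset.sum_le_sum fun j0 _ => ?_)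
  exact le_trans (norm_sum_le _ _) (Finset.sum_le_sum fun j0' _ => norm_single_le j0 j0' (f j0 j0'))

end BlockOf2

section TupleAux
variable {d : ℕ}

def castMat {m m' : ℕ} (h : m = m') (A : Mat m) : Mat m' :=
  A.submatrix (finCongr h.symm) (finCongr h.symm)

def castTup {m m' : ℕ} (h : m = m') (x : MatTup d m) : MatTup d m' :=
  fun r => castMat h (x r)

@[simp] lemma castMat_rfl {m : ℕ} (A : Mat m) : castMat rfl A = A := by
  simp [castMat]

@[simp] lemma castTup_rfl {m : ℕ} (x : MatTup d m) : castTup rfl x = x := by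
  funext r
  simp [castTup]

lemma norm_tup_eq {n m : ℕ} (f : MatTup d n) (g : MatTup d m) (h : ∀ r, ‖f r‖ = ‖g r‖) :
    ‖f‖ = ‖g‖ := by
  rw [Pi.norm_def, Pi.norm_def]
  congr 1
  refine Finset.sup_congr rfl fun r _ => ?_
  exact NNReal.coe_injective (by simp [coe_nnnorm, h r])

lemma norm_tup_le {n : ℕ} (f : MatTup d n) {C : ℝ} (hC : 0 ≤ C) (h : ∀ r, ‖f r‖ ≤ C) :
    ‖f‖ ≤ C :=
  (pi_norm_le_iff_of_nonneg hC).mpr h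

lemma norm_castMat {m m' : ℕ} (h : m = m') (A : Mat m) : ‖castMat h A‖ = ‖A‖ :=
  l2_opNorm_submatrix _ _ _

lemma norm_castTup {m m' : ℕ} (h : m = m') (x : MatTup d m) : ‖castTup h x‖ = ‖x‖ :=
  norm_tup_eq _ _ fun r => norm_castMat h (x r)

lemma castMat_mul {m m' : ℕ} (h : m = m') (A B : Mat m) :
    castMat h (A * B) = castMat h A * castMat h B := by
  rw [castMat, castMat, castMat, Matrix.submatrix_mul_equiv]

lemma castMat_inv {m m' : ℕ} (h : m = m') (A : Mat m) :
    (castMat h A)⁻¹ = castMat h A⁻¹ := by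
  rw [castMat, Matrix.inv_submatrix_equiv, castMat]

lemma castMat_star {m m' : ℕ} (h : m = m') (A : Mat m) :
    star (castMat h A) = castMat h (star A) := by
  rw [castMat, Matrix.star_eq_conjTranspose, Matrix.conjTranspose_submatrix,
    ← Matrix.star_eq_conjTranspose, castMat]

lemma castMat_one {m m' : ℕ} (h : m = m') : castMat h (1 : Mat m) = 1 := by
  rw [castMat, Matrix.submatrix_one_equiv]

lemma castMat_mem_unitary {m m' : ℕ} (h : m = m') (u : Mat m)
    (hu : u ∈ Matrix.unitaryGroup (Fin m) ℂ) :
    castMat h u ∈ Matrix.unitaryGroup (Fin m') ℂ := by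
  rw [Matrix.mem_unitaryGroup_iff, castMat_star, ← castMat_mul,
    Matrix.mem_unitaryGroup_iff.mp hu, castMat_one]

lemma castTup_sub {m m' : ℕ} (h : m = m') (x y : MatTup d m) :
    castTup h (x - y) = castTup h x - castTup h y := by
  funext r
  ext p q
  simp [castTup, castMat]

lemma castTup_simConj {m m' : ℕ} (h : m = m') (s : Mat m) (x : MatTup d m) :
    castTup h (simConj s x) = simConj (castMat h s) (castTup h x) := by
  funext r
  rw [castTup, simConj, simConj, castMat_mul, castMat_mul, castMat_inv]
  rfl

lemma simConj_sub {n : ℕ} (s : Mat n) (x y : MatTup d n) :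
    simConj s (x - y) = simConj s x - simConj s y := by
  funext r
  simp [simConj, Matrix.mul_sub, Matrix.sub_mul]

lemma simConj_comp {n : ℕ} (s t : Mat n) (x : MatTup d n) :
    simConj s (simConj t x) = simConj (t * s) x := by
  funext r
  simp [simConj, Matrix.mul_inv_rev, Matrix.mul_assoc]

lemma unitary_matrix_inv {n : ℕ} (u : Mat n) (hu : u ∈ Matrix.unitaryGroup (Fin n) ℂ) :
    u⁻¹ = star u :=
  Matrix.inv_eq_left_inv (Matrix.mem_unitaryGroup_iff'.mp hu)

lemma norm_simConj_unitary {n : ℕ} (u : Mat n) (hu : u ∈ Matrix.unitaryGroup (Fin n) ℂ)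
    (x : MatTup d n) : ‖simConj u x‖ = ‖x‖ :=
  norm_tup_eq _ _ fun r => norm_conj_unitary u hu (x r)

lemma one_kron_eq_diagB {k n : ℕ} (B : Mat n) :
    (1 : Matrix (Fin k) (Fin k) ℂ) ⊗ₖ B = diagB (fun _ : Fin k => B) := by
  ext ⟨i, s⟩ ⟨i', t⟩
  rw [Matrix.kroneckerMap_apply, diagB_apply]
  by_cases h : i = i' <;> simp [Matrix.one_apply, h]

lemma ampTup_apply {k n : ℕ} (a : MatTup d n) (r : Fin d) :
    ampTup k a r = ((1 : Matrix (Fin k) (Fin k) ℂ) ⊗ₖ a r).submatrix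
      finProdFinEquiv.symm finProdFinEquiv.symm := rfl

lemma norm_ampTup_le {k n : ℕ} (a : MatTup d n) : ‖ampTup k a‖ ≤ ‖a‖ := by
  refine norm_tup_le _ (norm_nonneg a) fun r => ?_
  rw [ampTup_apply, l2_opNorm_submatrix, one_kron_eq_diagB]
  exact norm_diagB_le _ (norm_nonneg a) fun _ => norm_le_pi_norm a r

end TupleAux

section BlkAux
variable {d : ℕ}

lemma norm_fromBlocks_le {α β : Type*} [Fintype α] [Fintype β] [DecidableEq α] [DecidableEq β]
    (X : Matrix α α ℂ) (Y : Matrix β β ℂ) :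
    ‖Matrix.fromBlocks X 0 0 Y‖ ≤ max ‖X‖ ‖Y‖ := by
  refine opNorm_le_of_sq _ (le_max_of_le_left (norm_nonneg X)) fun v => ?_
  have h1 : ∀ s : α, (Matrix.fromBlocks X 0 0 Y).mulVec v (Sum.inl s)
      = X.mulVec (v ∘ Sum.inl) s := by
    intro s
    simp [Matrix.mulVec, dotProduct, Fintype.sum_sum_type]
  have h2 : ∀ s : β, (Matrix.fromBlocks X 0 0 Y).mulVec v (Sum.inr s)
      = Y.mulVec (v ∘ Sum.inr) s := by
    intro s
    simp [Matrix.mulVec, dotProduct, Fintype.sum_sum_type]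
  rw [Fintype.sum_sum_type, Fintype.sum_sum_type (f := fun q => ‖v q‖ ^ 2)]
  simp only [h1, h2]
  have hX := sum_sq_mulVec_le X (v ∘ Sum.inl)
  have hY := sum_sq_mulVec_le Y (v ∘ Sum.inr)
  have hX2 : ‖X‖ ^ 2 ≤ max ‖X‖ ‖Y‖ ^ 2 :=
    pow_le_pow_left₀ (norm_nonneg X) (le_max_left _ _) 2
  have hY2 : ‖Y‖ ^ 2 ≤ max ‖X‖ ‖Y‖ ^ 2 :=
    pow_le_pow_left₀ (norm_nonneg Y) (le_max_right _ _) 2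
  have l1 : (0:ℝ) ≤ ∑ q, ‖(v ∘ Sum.inl) q‖ ^ 2 := by positivity
  have l2 : (0:ℝ) ≤ ∑ q, ‖(v ∘ Sum.inr) q‖ ^ 2 := by positivity
  calc ∑ s, ‖X.mulVec (v ∘ Sum.inl) s‖ ^ 2 + ∑ s, ‖Y.mulVec (v ∘ Sum.inr) s‖ ^ 2
      ≤ ‖X‖ ^ 2 * ∑ q, ‖(v ∘ Sum.inl) q‖ ^ 2 + ‖Y‖ ^ 2 * ∑ q, ‖(v ∘ Sum.inr) q‖ ^ 2 :=
        add_le_add hX hY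
    _ ≤ max ‖X‖ ‖Y‖ ^ 2 * ∑ q, ‖(v ∘ Sum.inl) q‖ ^ 2
        + max ‖X‖ ‖Y‖ ^ 2 * ∑ q, ‖(v ∘ Sum.inr) q‖ ^ 2 :=
        add_le_add (mul_le_mul_of_nonneg_right hX2 l1) (mul_le_mul_of_nonneg_right hY2 l2)
    _ = max ‖X‖ ‖Y‖ ^ 2 * (∑ q, ‖(v ∘ Sum.inl) q‖ ^ 2 + ∑ q, ‖(v ∘ Sum.inr) q‖ ^ 2) := by ring

lemma blk_eq_submatrix {n m : ℕ} (A : Matrix (Fin n) (Fin n) ℂ) (B : Matrix (Fin n) (Fin m) ℂ)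
    (C : Matrix (Fin m) (Fin n) ℂ) (D : Matrix (Fin m) (Fin m) ℂ) :
    blk A B C D = (Matrix.fromBlocks A B C D).submatrix finSumFinEquiv.symm finSumFinEquiv.symm :=
  rfl

lemma norm_blk_le {n m : ℕ} (X : Mat n) (Y : Mat m) : ‖blk X 0 0 Y‖ ≤ max ‖X‖ ‖Y‖ := by
  rw [blk_eq_submatrix, l2_opNorm_submatrix]
  exact norm_fromBlocks_le X Y

lemma blk_mul {n m : ℕ} (A A' : Mat n) (D D' : Mat m) :
    blk A 0 0 D * blk A' 0 0 D' = blk (A * A') 0 0 (D * D') := by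
  rw [blk_eq_submatrix, blk_eq_submatrix, Matrix.submatrix_mul_equiv,
    Matrix.fromBlocks_multiply, blk_eq_submatrix]
  congr 1 <;> simp

lemma blk_one {n m : ℕ} : blk (1 : Mat n) 0 0 (1 : Mat m) = 1 := by
  rw [blk_eq_submatrix, Matrix.fromBlocks_one, Matrix.submatrix_one_equiv]

lemma blk_star {n m : ℕ} (A : Mat n) (D : Mat m) :
    star (blk A 0 0 D) = blk (star A) 0 0 (star D) := by
  rw [blk_eq_submatrix, Matrix.star_eq_conjTranspose, Matrix.conjTranspose_submatrix,
    Matrix.fromBlocks_conjTranspose, blk_eq_submatrix]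
  congr 1 <;> simp [Matrix.star_eq_conjTranspose]

lemma blk_sub {n m : ℕ} (A A' : Mat n) (D D' : Mat m) :
    blk A 0 0 D - blk A' 0 0 D' = blk (A - A') 0 0 (D - D') := by
  ext p q
  simp only [Matrix.sub_apply, blk_eq_submatrix, Matrix.submatrix_apply]
  rcases finSumFinEquiv.symm p with s | s <;> rcases finSumFinEquiv.symm q with t | t <;>
    simp [Matrix.fromBlocks]

lemma blk_inv {n m : ℕ} (A : Mat n) (D : Mat m) (hA : A⁻¹ * A = 1) (hD : D⁻¹ * D = 1) :
    (blk A 0 0 D)⁻¹ = blk A⁻¹ 0 0 D⁻¹ :=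
  Matrix.inv_eq_left_inv (by rw [blk_mul, hA, hD, blk_one])

lemma blk_mem_unitary {n m : ℕ} (u : Mat n) (v : Mat m)
    (hu : u ∈ Matrix.unitaryGroup (Fin n) ℂ) (hv : v ∈ Matrix.unitaryGroup (Fin m) ℂ) :
    blk u 0 0 v ∈ Matrix.unitaryGroup (Fin (n + m)) ℂ := by
  rw [Matrix.mem_unitaryGroup_iff, blk_star, blk_mul,
    Matrix.mem_unitaryGroup_iff.mp hu, Matrix.mem_unitaryGroup_iff.mp hv, blk_one]

lemma dSum_sub {n m : ℕ} (x x' : MatTup d n) (y y' : MatTup d m) :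
    dSum x y - dSum x' y' = dSum (x - x') (y - y') := by
  funext r
  exact blk_sub _ _ _ _

lemma norm_dSum_le {n m : ℕ} (x : MatTup d n) (y : MatTup d m) :
    ‖dSum x y‖ ≤ max ‖x‖ ‖y‖ := by
  refine norm_tup_le _ (le_max_of_le_left (norm_nonneg x)) fun r => ?_
  exact le_trans (norm_blk_le (x r) (y r))
    (max_le_max (norm_le_pi_norm x r) (norm_le_pi_norm y r))

lemma dSum_simConj {n m : ℕ} (s : Mat n) (t : Mat m) (x : MatTup d n) (y : MatTup d m)
    (hs : s⁻¹ * s = 1) (ht : t⁻¹ * t = 1) :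
    dSum (simConj s x) (simConj t y) = simConj (blk s 0 0 t) (dSum x y) := by
  funext r
  show blk (simConj s x r) 0 0 (simConj t y r) = (blk s 0 0 t)⁻¹ * blk (x r) 0 0 (y r) * blk s 0 0 t
  rw [blk_inv s t hs ht, blk_mul, blk_mul]
  rfl

end BlkAux

section PolyAux
variable {d : ℕ}

/-- conjugation by a unitary as an algebra hom -/
noncomputable def conjAlgHom {n : ℕ} (u : Mat n) (hu : u ∈ Matrix.unitaryGroup (Fin n) ℂ) :
    Mat n →ₐ[ℂ] Mat n where
  toFun := fun B => star u * B * u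
  map_one' := by
    show star u * 1 * u = 1
    rw [Matrix.mul_one, Matrix.mem_unitaryGroup_iff'.mp hu]
  map_mul' := fun A B => by
    have h : u * star u = 1 := Matrix.mem_unitaryGroup_iff.mp hu
    calc star u * (A * B) * u = star u * A * ((u * star u) * B) * u := by
          rw [h, Matrix.one_mul, Matrix.mul_assoc (star u) A B]
      _ = star u * A * u * (star u * B * u) := by
          simp only [Matrix.mul_assoc]
  map_zero' := by simp
  map_add' := fun A B => by
    show star u * (A + B) * u = star u * A * u + star u * B * u
    rw [Matrix.mul_add, Matrix.add_mul]
  commutes' := fun c => by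
    rw [Algebra.algebraMap_eq_smul_one]
    show star u * (c • (1 : Mat n)) * u = c • (1 : Mat n)
    rw [Matrix.mul_smul, Matrix.smul_mul, Matrix.mul_one, Matrix.mem_unitaryGroup_iff'.mp hu]

/-- the ampliation `B ↦ 1ₖ ⊗ B` as an algebra hom -/
noncomputable def ampAlgHom (k n : ℕ) : Mat n →ₐ[ℂ] Mat (k * n) where
  toFun := fun B => ((1 : Matrix (Fin k) (Fin k) ℂ) ⊗ₖ B).submatrix
    finProdFinEquiv.symm finProdFinEquiv.symm
  map_one' := by
    show ((1 : Matrix (Fin k) (Fin k) ℂ) ⊗ₖ (1 : Mat n)).submatrix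
      finProdFinEquiv.symm finProdFinEquiv.symm = 1
    rw [Matrix.one_kronecker_one, Matrix.submatrix_one_equiv]
  map_mul' := fun A B => by
    show ((1 : Matrix (Fin k) (Fin k) ℂ) ⊗ₖ (A * B)).submatrix
      finProdFinEquiv.symm finProdFinEquiv.symm = _
    rw [Matrix.submatrix_mul_equiv, ← Matrix.mul_kronecker_mul, Matrix.one_mul]
  map_zero' := by
    ext p q
    simp
  map_add' := fun A B => by
    ext p q
    simp [Matrix.kroneckerMap_apply, Matrix.mul_add, mul_add]
  commutes' := fun c => by
    rw [Algebra.algebraMap_eq_smul_one, Algebra.algebraMap_eq_smul_one]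
    show ((1 : Matrix (Fin k) (Fin k) ℂ) ⊗ₖ (c • (1 : Mat n))).submatrix
      finProdFinEquiv.symm finProdFinEquiv.symm = c • (1 : Mat (k * n))
    rw [Matrix.kronecker_smul, Matrix.one_kronecker_one]
    ext p q
    simp only [Matrix.submatrix_apply, Matrix.smul_apply, Matrix.one_apply, smul_ite, smul_zero,
      smul_eq_mul, mul_one, Prod.mk.injEq]
    have hiff : (p.divNat = q.divNat ∧ p.modNat = q.modNat) ↔ p = q := by
      constructor
      · rintro ⟨h1, h2⟩
        exact finProdFinEquiv.symm.injective (Prod.ext h1 h2)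
      · rintro rfl
        exact ⟨rfl, rfl⟩
    rw [if_congr (Iff.intro (fun h => finProdFinEquiv.symm.injective h)
      (fun h => by rw [h])) rfl rfl]

lemma polyEval_algHom {n N : ℕ} (Φ : Mat n →ₐ[ℂ] Mat N) (p : FreePoly d) (x : MatTup d n) :
    polyEval p (fun r => Φ (x r)) = Φ (polyEval p x) := by
  have h : (FreeAlgebra.lift ℂ (fun i : Fin d => Φ (x i)))
      = Φ.comp (FreeAlgebra.lift ℂ fun i : Fin d => x i) := by
    apply FreeAlgebra.hom_ext
    funext i
    simp [FreeAlgebra.lift_ι_apply]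
  rw [polyEval, h]
  rfl

lemma simConj_eq_conjAlgHom {n : ℕ} (u : Mat n) (hu : u ∈ Matrix.unitaryGroup (Fin n) ℂ)
    (x : MatTup d n) : simConj u x = fun r => conjAlgHom u hu (x r) := by
  funext r
  show u⁻¹ * x r * u = star u * x r * u
  rw [unitary_matrix_inv u hu]

lemma ampTup_eq_ampAlgHom {k n : ℕ} (a : MatTup d n) :
    ampTup k a = fun r => ampAlgHom k n (a r) := rfl

lemma matPolyEval_eq {J n : ℕ} (δ : Matrix (Fin J) (Fin J) (FreePoly d)) (x : MatTup d n) :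
    matPolyEval δ x = (blockOf fun j j' => polyEval (δ j j') x).submatrix
      finProdFinEquiv.symm finProdFinEquiv.symm := rfl

lemma norm_matPolyEval {J n : ℕ} (δ : Matrix (Fin J) (Fin J) (FreePoly d)) (x : MatTup d n) :
    ‖matPolyEval δ x‖ = ‖blockOf fun j j' => polyEval (δ j j') x‖ := by
  rw [matPolyEval_eq, l2_opNorm_submatrix]

lemma norm_matPolyEval_simConj {J n : ℕ} (δ : Matrix (Fin J) (Fin J) (FreePoly d))
    (u : Mat n) (hu : u ∈ Matrix.unitaryGroup (Fin n) ℂ) (x : MatTup d n) :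
    ‖matPolyEval δ (simConj u x)‖ = ‖matPolyEval δ x‖ := by
  rw [norm_matPolyEval, norm_matPolyEval]
  have h1 : (fun j j' => polyEval (δ j j') (simConj u x))
      = fun j j' => star u * polyEval (δ j j') x * u := by
    funext j j'
    rw [simConj_eq_conjAlgHom u hu, polyEval_algHom]
    rfl
  rw [h1, ← blockOf_conj]
  have hW2 : (diagB fun _ : Fin J => u) * star (diagB fun _ : Fin J => u) = 1 := by
    rw [diagB_star, diagB_mul_diagB]
    have : (fun j : Fin J => u * star u) = fun _ : Fin J => (1 : Mat n) := by
      funext j; exact Matrix.mem_unitaryGroup_iff.mp hu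
    rw [this, diagB_one]
  have hW1 : star (diagB fun _ : Fin J => star u) * (diagB fun _ : Fin J => star u) = 1 := by
    rw [diagB_star, diagB_mul_diagB]
    have : (fun j : Fin J => star (star u) * star u) = fun _ : Fin J => (1 : Mat n) := by
      funext j; rw [star_star]; exact Matrix.mem_unitaryGroup_iff.mp hu
    rw [this, diagB_one]
  rw [norm_mul_unitary _ _ hW2, norm_unitary_mul _ hW1]

lemma blockOf_submatrix_inner {J : Type*} [Fintype J] [DecidableEq J]
    {n n' : Type*} [Fintype n] [Fintype n'] [DecidableEq n] [DecidableEq n']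
    (f : J → J → Matrix n' n' ℂ) (e : n ≃ n') :
    blockOf (fun j j' => (f j j').submatrix e e)
      = (blockOf f).submatrix ((Equiv.refl J).prodCongr e) ((Equiv.refl J).prodCongr e) := rfl

/-- the index shuffle `J × (k × n) ≃ k × (J × n)` -/
def shufE (J k n : Type*) : (J × (k × n)) ≃ (k × (J × n)) :=
  ((Equiv.prodAssoc J k n).symm.trans
    ((Equiv.prodComm J k).prodCongr (Equiv.refl n))).trans (Equiv.prodAssoc k J n)

lemma blockOf_kron_shuffle {J k n : Type*} [Fintype J] [Fintype k] [Fintype n]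
    [DecidableEq J] [DecidableEq k] [DecidableEq n] (g : J → J → Matrix n n ℂ) :
    blockOf (fun j j' => (1 : Matrix k k ℂ) ⊗ₖ g j j')
      = (diagB (fun _ : k => blockOf g)).submatrix (shufE J k n) (shufE J k n) := by
  ext ⟨j, i, s⟩ ⟨j', i', t⟩
  rw [Matrix.submatrix_apply]
  have hs : shufE J k n (j, i, s) = (i, j, s) := rfl
  have ht : shufE J k n (j', i', t) = (i', j', t) := rfl
  rw [hs, ht, diagB_apply]
  show (1 : Matrix k k ℂ) i i' * g j j' s t = _
  by_cases h : i = i' <;> simp [Matrix.one_apply, h, blockOf]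

lemma norm_matPolyEval_amp {J n : ℕ} (δ : Matrix (Fin J) (Fin J) (FreePoly d))
    (k : ℕ) (x : MatTup d n) :
    ‖matPolyEval δ (ampTup k x)‖ ≤ ‖matPolyEval δ x‖ := by
  rw [norm_matPolyEval, norm_matPolyEval]
  have h1 : (fun j j' => polyEval (δ j j') (ampTup k x))
      = fun j j' => ((1 : Matrix (Fin k) (Fin k) ℂ) ⊗ₖ polyEval (δ j j') x).submatrix
        finProdFinEquiv.symm finProdFinEquiv.symm := by
    funext j j'
    rw [ampTup_eq_ampAlgHom, polyEval_algHom]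
    rfl
  rw [h1, blockOf_submatrix_inner, l2_opNorm_submatrix, blockOf_kron_shuffle,
    l2_opNorm_submatrix]
  exact norm_diagB_le _ (norm_nonneg _) fun _ => le_refl _

lemma polyEval_bound (p : FreePoly d) (R : ℝ) (hR : 0 ≤ R) :
    ∃ B C : ℝ, 0 ≤ B ∧ 0 ≤ C ∧ ∀ (n : ℕ) (x y : MatTup d n), ‖x‖ ≤ R → ‖y‖ ≤ R →
      ‖polyEval p x‖ ≤ B ∧ ‖polyEval p x - polyEval p y‖ ≤ C * ‖x - y‖ := by
  induction p using FreeAlgebra.induction with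
  | grade0 c =>
    refine ⟨‖c‖, 0, norm_nonneg c, le_refl 0, fun n x y hx hy => ?_⟩
    have he : ∀ z : MatTup d n, polyEval (algebraMap ℂ (FreePoly d) c) z
        = algebraMap ℂ (Mat n) c := fun z => AlgHom.commutes _ c
    constructor
    · rw [he, Algebra.algebraMap_eq_smul_one]
      calc ‖c • (1 : Mat n)‖ = ‖c‖ * ‖(1 : Mat n)‖ := norm_smul c (1 : Mat n)
        _ ≤ ‖c‖ * 1 := mul_le_mul_of_nonneg_left norm_one_le_mat (norm_nonneg c)
        _ = ‖c‖ := mul_one _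
    · simp [he]
  | grade1 i =>
    refine ⟨R, 1, hR, zero_le_one, fun n x y hx hy => ?_⟩
    have he : ∀ z : MatTup d n, polyEval (FreeAlgebra.ι ℂ i) z = z i := fun z =>
      FreeAlgebra.lift_ι_apply _ _
    constructor
    · rw [he]; exact le_trans (norm_le_pi_norm x i) hx
    · rw [he, he, one_mul]
      exact norm_le_pi_norm (x - y) i
  | mul p q hp hq =>
    obtain ⟨B1, C1, hB1, hC1, H1⟩ := hp
    obtain ⟨B2, C2, hB2, hC2, H2⟩ := hq
    refine ⟨B1 * B2, B1 * C2 + C1 * B2, by positivity, by positivity, fun n x y hx hy => ?_⟩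
    obtain ⟨hx1, hd1⟩ := H1 n x y hx hy
    obtain ⟨hx2, hd2⟩ := H2 n x y hx hy
    obtain ⟨hy1, -⟩ := H1 n y y hy hy
    obtain ⟨hy2, -⟩ := H2 n y y hy hy
    have he : ∀ z : MatTup d n, polyEval (p * q) z = polyEval p z * polyEval q z := fun z =>
      map_mul _ _ _
    constructor
    · rw [he]
      exact le_trans (norm_mul_le _ _) (mul_le_mul hx1 hx2 (norm_nonneg _) hB1)
    · rw [he, he]
      have hsplit : polyEval p x * polyEval q x - polyEval p y * polyEval q y
          = polyEval p x * (polyEval q x - polyEval q y)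
            + (polyEval p x - polyEval p y) * polyEval q y := by
        rw [Matrix.mul_sub, Matrix.sub_mul]
        abel
      rw [hsplit]
      calc ‖_ + _‖ ≤ ‖polyEval p x * (polyEval q x - polyEval q y)‖
            + ‖(polyEval p x - polyEval p y) * polyEval q y‖ := norm_add_le _ _
        _ ≤ B1 * (C2 * ‖x - y‖) + C1 * ‖x - y‖ * B2 := by
            refine add_le_add (le_trans (norm_mul_le _ _) ?_) (le_trans (norm_mul_le _ _) ?_)
            · exact mul_le_mul hx1 hd2 (norm_nonneg _) hB1
            · exact mul_le_mul hd1 hy2 (norm_nonneg _) (by positivity)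
        _ = (B1 * C2 + C1 * B2) * ‖x - y‖ := by ring
  | add p q hp hq =>
    obtain ⟨B1, C1, hB1, hC1, H1⟩ := hp
    obtain ⟨B2, C2, hB2, hC2, H2⟩ := hq
    refine ⟨B1 + B2, C1 + C2, by positivity, by positivity, fun n x y hx hy => ?_⟩
    obtain ⟨hx1, hd1⟩ := H1 n x y hx hy
    obtain ⟨hx2, hd2⟩ := H2 n x y hx hy
    have he : ∀ z : MatTup d n, polyEval (p + q) z = polyEval p z + polyEval q z := fun z =>
      map_add _ _ _
    constructor
    · rw [he]
      exact le_trans (norm_add_le _ _) (add_le_add hx1 hx2)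
    · rw [he, he]
      have : polyEval p x + polyEval q x - (polyEval p y + polyEval q y)
          = (polyEval p x - polyEval p y) + (polyEval q x - polyEval q y) := by abel
      rw [this, add_mul]
      exact le_trans (norm_add_le _ _) (add_le_add hd1 hd2)

lemma matPolyEval_lip {J : ℕ} (δ : Matrix (Fin J) (Fin J) (FreePoly d)) (R : ℝ) (hR : 0 ≤ R) :
    ∃ C : ℝ, 0 ≤ C ∧ ∀ (n : ℕ) (x y : MatTup d n), ‖x‖ ≤ R → ‖y‖ ≤ R →
      ‖matPolyEval δ x - matPolyEval δ y‖ ≤ C * ‖x - y‖ := by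
  have key := fun j j' : Fin J => polyEval_bound (δ j j') R hR
  choose B C hB hC H using key
  refine ⟨∑ j, ∑ j', C j j',
    Finset.sum_nonneg fun j _ => Finset.sum_nonneg fun j' _ => hC j j', fun n x y hx hy => ?_⟩
  have keq : matPolyEval δ x - matPolyEval δ y
      = (blockOf (fun j j' => polyEval (δ j j') x - polyEval (δ j j') y)).submatrix
        finProdFinEquiv.symm finProdFinEquiv.symm := by
    rw [matPolyEval_eq, matPolyEval_eq, ← blockOf_sub]
    ext p q
    simp [Matrix.sub_apply]
  rw [keq, l2_opNorm_submatrix]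
  refine le_trans (norm_blockOf_le_sum _) ?_
  rw [Finset.sum_mul]
  refine Finset.sum_le_sum fun j _ => ?_
  rw [Finset.sum_mul]
  exact Finset.sum_le_sum fun j' _ => (H j j' n x y hx hy).2

end PolyAux

section FBallAux
variable {d : ℕ}

lemma simConj_one {n : ℕ} (x : MatTup d n) : simConj (1 : Mat n) x = x := by
  funext r
  show (1 : Mat n)⁻¹ * x r * 1 = x r
  rw [Matrix.inv_eq_left_inv (Matrix.one_mul (1 : Mat n)), Matrix.one_mul, Matrix.mul_one]

lemma star_mem_unitary {n : ℕ} (u : Mat n) (hu : u ∈ Matrix.unitaryGroup (Fin n) ℂ) :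
    star u ∈ Matrix.unitaryGroup (Fin n) ℂ := by
  rw [Matrix.mem_unitaryGroup_iff, star_star]
  exact Matrix.mem_unitaryGroup_iff'.mp hu

lemma mem_FBall_iff {n : ℕ} (a : MatTup d n) (r : ℝ) {N : ℕ} (z : MatTup d N) :
    (⟨N, z⟩ : MSpace d) ∈ FBall (⟨n, a⟩ : MSpace d) r ↔
      ∃ k : ℕ, 1 ≤ k ∧ ∃ h : N = k * n, ∃ u : Matrix.unitaryGroup (Fin (k * n)) ℂ,
        ‖castTup h z - simConj (u : Mat (k * n)) (ampTup k a)‖ < r := by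
  constructor
  · rintro ⟨k, hk, x, hx, u, hy⟩
    have hN : N = k * n := congrArg Sigma.fst hy
    subst hN
    have hz : z = simConj (u : Mat (k * n)) x := by
      exact eq_of_heq (Sigma.mk.inj_iff.mp hy).2
    refine ⟨k, hk, rfl, u, ?_⟩
    rw [castTup_rfl, hz, ← simConj_sub, norm_simConj_unitary _ u.2]
    exact hx
  · rintro ⟨k, hk, h, u, hb⟩
    subst h
    rw [castTup_rfl] at hb
    have hsu : star (u : Mat (k * n)) ∈ Matrix.unitaryGroup (Fin (k * n)) ℂ :=
      star_mem_unitary _ u.2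
    refine ⟨k, hk, simConj (star (u : Mat (k * n))) z, ?_, u, ?_⟩
    · have hamp : simConj (star (u : Mat (k * n)))
          (simConj (u : Mat (k * n)) (ampTup k a)) = ampTup k a := by
        rw [simConj_comp, Matrix.mem_unitaryGroup_iff.mp u.2, simConj_one]
      calc ‖simConj (star (u : Mat (k * n))) z - ampTup k a‖
          = ‖simConj (star (u : Mat (k * n)))
              (z - simConj (u : Mat (k * n)) (ampTup k a))‖ := by
            rw [simConj_sub, hamp]
        _ < r := by rwa [norm_simConj_unitary _ hsu]
    · have : simConj (u : Mat (k * n)) (simConj (star (u : Mat (k * n))) z) = z := by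
        rw [simConj_comp, Matrix.mem_unitaryGroup_iff'.mp u.2, simConj_one]
      rw [this]

lemma castTup_ampTup_one {n : ℕ} (a : MatTup d n) :
    castTup ((one_mul n).symm) a = ampTup 1 a := by
  funext r
  ext p q
  obtain ⟨⟨i, s⟩, rfl⟩ := finProdFinEquiv.surjective p
  obtain ⟨⟨i', t⟩, rfl⟩ := finProdFinEquiv.surjective q
  have hi0 : (i : ℕ) = 0 := by omega
  have hi0' : (i' : ℕ) = 0 := by omega
  have hv1 : (finCongr (one_mul n) (finProdFinEquiv (i, s))) = s := by
    apply Fin.ext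
    simp [finProdFinEquiv, hi0]
  have hv2 : (finCongr (one_mul n) (finProdFinEquiv (i', t))) = t := by
    apply Fin.ext
    simp [finProdFinEquiv, hi0']
  show a r (finCongr (one_mul n) _) (finCongr (one_mul n) _)
    = ((1 : Matrix (Fin 1) (Fin 1) ℂ) ⊗ₖ a r) (finProdFinEquiv.symm _) (finProdFinEquiv.symm _)
  rw [Equiv.symm_apply_apply, Equiv.symm_apply_apply, Matrix.kroneckerMap_apply, hv1, hv2]
  have hii : i = i' := Subsingleton.elim i i'
  subst hii
  show a r s t = (1 : Matrix (Fin 1) (Fin 1) ℂ) i i * a r s t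
  rw [Matrix.one_apply_eq, one_mul]

lemma self_mem_FBall {n : ℕ} (a : MatTup d n) {r : ℝ} (hr : 0 < r) :
    (⟨n, a⟩ : MSpace d) ∈ FBall (⟨n, a⟩ : MSpace d) r := by
  rw [mem_FBall_iff]
  refine ⟨1, le_refl 1, (one_mul n).symm, 1, ?_⟩
  have h1 : ((1 : Matrix.unitaryGroup (Fin (1 * n)) ℂ) : Mat (1 * n)) = (1 : Mat (1 * n)) := rfl
  rw [h1, simConj_one, castTup_ampTup_one, sub_self]
  simpa using hr

end FBallAux

section SumShuf
variable {d : ℕ}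

/-- shuffle `Fin (k₁n + k₂n) ≃ Fin ((k₁+k₂)n)` -/
def sumShuf (k1 k2 n : ℕ) : Fin (k1 * n + k2 * n) ≃ Fin ((k1 + k2) * n) :=
  (finSumFinEquiv (m := k1 * n) (n := k2 * n)).symm.trans <|
    ((finProdFinEquiv.symm.sumCongr finProdFinEquiv.symm).trans <|
      ((Equiv.sumProdDistrib (Fin k1) (Fin k2) (Fin n)).symm).trans <|
        (finSumFinEquiv.prodCongr (Equiv.refl (Fin n))).trans finProdFinEquiv)

lemma sumShuf_inl (k1 k2 n : ℕ) (i : Fin k1) (s : Fin n) :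
    sumShuf k1 k2 n (finSumFinEquiv (Sum.inl (finProdFinEquiv (i, s))))
      = finProdFinEquiv (finSumFinEquiv (Sum.inl i), s) := by
  simp [sumShuf, Equiv.sumCongr_apply, Equiv.sumProdDistrib]

lemma sumShuf_inr (k1 k2 n : ℕ) (i : Fin k2) (s : Fin n) :
    sumShuf k1 k2 n (finSumFinEquiv (Sum.inr (finProdFinEquiv (i, s))))
      = finProdFinEquiv (finSumFinEquiv (Sum.inr i), s) := by
  simp [sumShuf, Equiv.sumCongr_apply, Equiv.sumProdDistrib]

lemma dSum_apply' {n m : ℕ} (x : MatTup d n) (y : MatTup d m) (r : Fin d)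
    (p' q' : Fin n ⊕ Fin m) :
    dSum x y r (finSumFinEquiv p') (finSumFinEquiv q')
      = Matrix.fromBlocks (x r) 0 0 (y r) p' q' := by
  show (Matrix.fromBlocks (x r) 0 0 (y r)).submatrix finSumFinEquiv.symm finSumFinEquiv.symm _ _
    = _
  rw [Matrix.submatrix_apply, Equiv.symm_apply_apply, Equiv.symm_apply_apply]

lemma ampTup_entry {n : ℕ} (k : ℕ) (a : MatTup d n) (r : Fin d) (i i' : Fin k) (s t : Fin n) :
    ampTup k a r (finProdFinEquiv (i, s)) (finProdFinEquiv (i', t))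
      = (1 : Matrix (Fin k) (Fin k) ℂ) i i' * a r s t := by
  rw [ampTup_apply, Matrix.submatrix_apply, Equiv.symm_apply_apply, Equiv.symm_apply_apply,
    Matrix.kroneckerMap_apply]

lemma dSum_amp {n : ℕ} (k1 k2 : ℕ) (a : MatTup d n) (r : Fin d)
    (p q : Fin (k1 * n + k2 * n)) :
    dSum (ampTup k1 a) (ampTup k2 a) r p q
      = ampTup (k1 + k2) a r (sumShuf k1 k2 n p) (sumShuf k1 k2 n q) := by
  obtain ⟨p', rfl⟩ := finSumFinEquiv.surjective p
  obtain ⟨q', rfl⟩ := finSumFinEquiv.surjective q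
  rcases p' with p1 | p2 <;> rcases q' with q1 | q2
  · obtain ⟨⟨i, s⟩, rfl⟩ := finProdFinEquiv.surjective p1
    obtain ⟨⟨j, t⟩, rfl⟩ := finProdFinEquiv.surjective q1
    rw [dSum_apply', sumShuf_inl, sumShuf_inl, ampTup_entry, Matrix.fromBlocks_apply₁₁,
      ampTup_entry]
    congr 1
    by_cases h : i = j
    · subst h; rw [Matrix.one_apply_eq, Matrix.one_apply_eq]
    · rw [Matrix.one_apply_ne h, Matrix.one_apply_ne
        (fun hc => h (Sum.inl_injective (finSumFinEquiv.injective hc)))]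
  · obtain ⟨⟨i, s⟩, rfl⟩ := finProdFinEquiv.surjective p1
    obtain ⟨⟨j, t⟩, rfl⟩ := finProdFinEquiv.surjective q2
    rw [dSum_apply', sumShuf_inl, sumShuf_inr, ampTup_entry, Matrix.fromBlocks_apply₁₂]
    rw [Matrix.one_apply_ne (fun hc => Sum.inl_ne_inr (finSumFinEquiv.injective hc)),
      zero_mul]
    rfl
  · obtain ⟨⟨i, s⟩, rfl⟩ := finProdFinEquiv.surjective p2
    obtain ⟨⟨j, t⟩, rfl⟩ := finProdFinEquiv.surjective q1
    rw [dSum_apply', sumShuf_inr, sumShuf_inl, ampTup_entry, Matrix.fromBlocks_apply₂₁]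
    rw [Matrix.one_apply_ne (fun hc => Sum.inr_ne_inl (finSumFinEquiv.injective hc)),
      zero_mul]
    rfl
  · obtain ⟨⟨i, s⟩, rfl⟩ := finProdFinEquiv.surjective p2
    obtain ⟨⟨j, t⟩, rfl⟩ := finProdFinEquiv.surjective q2
    rw [dSum_apply', sumShuf_inr, sumShuf_inr, ampTup_entry, Matrix.fromBlocks_apply₂₂,
      ampTup_entry]
    congr 1
    by_cases h : i = j
    · subst h; rw [Matrix.one_apply_eq, Matrix.one_apply_eq]
    · rw [Matrix.one_apply_ne h, Matrix.one_apply_ne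
        (fun hc => h (Sum.inr_injective (finSumFinEquiv.injective hc)))]

lemma perm_simConj {N : ℕ} (τ : Fin N ≃ Fin N) :
    ∃ P : Mat N, P ∈ Matrix.unitaryGroup (Fin N) ℂ ∧
      ∀ M : Mat N, M.submatrix ⇑τ ⇑τ = P⁻¹ * M * P := by
  set P : Mat N := (1 : Mat N).submatrix id ⇑τ with hPdef
  have hPs : star P = (1 : Mat N).submatrix ⇑τ id := by
    rw [hPdef, Matrix.star_eq_conjTranspose, Matrix.conjTranspose_submatrix,
      Matrix.conjTranspose_one]
  have hmem : P ∈ Matrix.unitaryGroup (Fin N) ℂ := by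
    rw [Matrix.mem_unitaryGroup_iff']
    rw [hPs, hPdef]
    have h := Matrix.submatrix_mul_equiv (1 : Mat N) (1 : Mat N) ⇑τ (Equiv.refl (Fin N)) ⇑τ
    simp only [Equiv.coe_refl] at h
    rw [h, Matrix.one_mul, Matrix.submatrix_one_equiv]
  refine ⟨P, hmem, fun M => ?_⟩
  have s1 : (1 : Mat N).submatrix ⇑τ id * M = M.submatrix ⇑τ id := by
    have h := Matrix.submatrix_mul_equiv (1 : Mat N) M ⇑τ (Equiv.refl (Fin N)) id
    simp only [Equiv.coe_refl, Matrix.submatrix_id_id] at h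
    rw [h, Matrix.one_mul]
  have s2 : M.submatrix ⇑τ id * (1 : Mat N).submatrix id ⇑τ = M.submatrix ⇑τ ⇑τ := by
    have h := Matrix.submatrix_mul_equiv M (1 : Mat N) ⇑τ (Equiv.refl (Fin N)) ⇑τ
    simp only [Equiv.coe_refl, Matrix.submatrix_id_id] at h
    rw [h, Matrix.mul_one]
  rw [unitary_matrix_inv P hmem, hPs, s1, s2]

lemma dSum_amp_simConj {n : ℕ} (k1 k2 : ℕ) (a : MatTup d n)
    (h : k1 * n + k2 * n = (k1 + k2) * n) :
    ∃ P : Mat ((k1 + k2) * n), P ∈ Matrix.unitaryGroup (Fin ((k1 + k2) * n)) ℂ ∧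
      castTup h (dSum (ampTup k1 a) (ampTup k2 a)) = simConj P (ampTup (k1 + k2) a) := by
  set τ : Fin ((k1 + k2) * n) ≃ Fin ((k1 + k2) * n) :=
    (finCongr h.symm).trans (sumShuf k1 k2 n) with hτ
  obtain ⟨P, hP, hPs⟩ := perm_simConj τ
  refine ⟨P, hP, ?_⟩
  funext r
  show castMat h (dSum (ampTup k1 a) (ampTup k2 a) r) = P⁻¹ * ampTup (k1 + k2) a r * P
  rw [← hPs]
  ext p q
  rw [Matrix.submatrix_apply, castMat, Matrix.submatrix_apply, dSum_amp k1 k2 a r]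
  rw [hτ]
  rfl

end SumShuf

end AuxProofs

/-- The fat topology is admissible: each `F(a,r)` is a bounded nc domain; it is finer
than the free topology (every point of a basic free set `G_δ` has a fat neighborhood
inside it) and coarser than the fine topology (every fat open set is fine open). -/
theorem fat_topology_admissible (d : ℕ) (hd : 1 ≤ d) :
    (∀ (n : ℕ) (a : MatTup d n) (r : ℝ), 0 < r →
      IsNCDomain (FBall (⟨n, a⟩ : MSpace d) r) ∧
        ∃ B : ℝ, ∀ y ∈ FBall (⟨n, a⟩ : MSpace d) r, ‖y.2‖ ≤ B) ∧
    (∀ (J : ℕ) (δ : Matrix (Fin J) (Fin J) (FreePoly d)) (x : MSpace d),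
      x ∈ GSet δ → ∃ ε : ℝ, 0 < ε ∧ FBall x ε ⊆ GSet δ) ∧
    (∀ U : Set (MSpace d), FatOpen U → FineOpen U) := by
  have main1 : ∀ (n : ℕ) (a : MatTup d n) (r : ℝ), 0 < r →
      IsNCDomain (FBall (⟨n, a⟩ : MSpace d) r) ∧
        ∃ B : ℝ, ∀ y ∈ FBall (⟨n, a⟩ : MSpace d) r, ‖y.2‖ ≤ B := by
    intro n a r hr
    constructor
    · refine ⟨?_, ?_, ?_⟩
      · -- duOpen
        intro m
        rw [Metric.isOpen_iff]
        intro z hz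
        rw [Set.mem_setOf_eq, mem_FBall_iff] at hz
        obtain ⟨k, hk, h, u, hb⟩ := hz
        subst h
        rw [castTup_rfl] at hb
        refine ⟨r - ‖z - simConj (u : Mat (k * n)) (ampTup k a)‖, by linarith, ?_⟩
        intro z' hz'
        rw [Metric.mem_ball, dist_eq_norm] at hz'
        rw [Set.mem_setOf_eq, mem_FBall_iff]
        refine ⟨k, hk, rfl, u, ?_⟩
        rw [castTup_rfl]
        calc ‖z' - simConj (u : Mat (k * n)) (ampTup k a)‖
            = ‖(z' - z) + (z - simConj (u : Mat (k * n)) (ampTup k a))‖ := by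
              rw [sub_add_sub_cancel]
          _ ≤ ‖z' - z‖ + ‖z - simConj (u : Mat (k * n)) (ampTup k a)‖ := norm_add_le _ _
          _ < r := by linarith
      · -- dsum_mem
        intro n1 m1 x y hx hy
        rw [mem_FBall_iff] at hx hy
        obtain ⟨k1, hk1, h1, u1, hb1⟩ := hx
        obtain ⟨k2, hk2, h2, u2, hb2⟩ := hy
        subst h1
        subst h2
        rw [castTup_rfl] at hb1 hb2
        rw [mem_FBall_iff]
        have h : k1 * n + k2 * n = (k1 + k2) * n := (add_mul k1 k2 n).symm
        obtain ⟨P, hPmem, hPeq⟩ := dSum_amp_simConj k1 k2 a h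
        have hWmem : blk ((u1 : Mat (k1 * n))) 0 0 ((u2 : Mat (k2 * n)))
            ∈ Matrix.unitaryGroup (Fin (k1 * n + k2 * n)) ℂ :=
          blk_mem_unitary _ _ u1.2 u2.2
        have hWc : castMat h (blk ((u1 : Mat (k1 * n))) 0 0 ((u2 : Mat (k2 * n))))
            ∈ Matrix.unitaryGroup (Fin ((k1 + k2) * n)) ℂ := castMat_mem_unitary h _ hWmem
        refine ⟨k1 + k2, by omega, h, ⟨_, mul_mem hPmem hWc⟩, ?_⟩
        have hinv1 : ((u1 : Mat (k1 * n)))⁻¹ * (u1 : Mat (k1 * n)) = 1 := by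
          rw [unitary_matrix_inv _ u1.2]
          exact Matrix.mem_unitaryGroup_iff'.mp u1.2
        have hinv2 : ((u2 : Mat (k2 * n)))⁻¹ * (u2 : Mat (k2 * n)) = 1 := by
          rw [unitary_matrix_inv _ u2.2]
          exact Matrix.mem_unitaryGroup_iff'.mp u2.2
        have key : simConj (P * castMat h (blk ((u1 : Mat (k1 * n))) 0 0 ((u2 : Mat (k2 * n)))))
            (ampTup (k1 + k2) a)
            = castTup h (dSum (simConj (u1 : Mat (k1 * n)) (ampTup k1 a))
                (simConj (u2 : Mat (k2 * n)) (ampTup k2 a))) := by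
          rw [dSum_simConj _ _ _ _ hinv1 hinv2, castTup_simConj, hPeq, simConj_comp]
        rw [key]
        rw [← castTup_sub, norm_castTup, dSum_sub]
        exact lt_of_le_of_lt (norm_dSum_le _ _) (max_lt hb1 hb2)
      · -- unitary_mem
        intro m v x hx
        rw [mem_FBall_iff] at hx
        obtain ⟨k, hk, h, u, hb⟩ := hx
        subst h
        rw [castTup_rfl] at hb
        rw [mem_FBall_iff]
        refine ⟨k, hk, rfl, u * v, ?_⟩
        rw [castTup_rfl]
        have hc : ((u * v : Matrix.unitaryGroup (Fin (k * n)) ℂ) : Mat (k * n))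
            = (u : Mat (k * n)) * (v : Mat (k * n)) := rfl
        rw [hc, ← simConj_comp, ← simConj_sub, norm_simConj_unitary _ v.2]
        exact hb
    · -- bounded
      refine ⟨‖a‖ + r, ?_⟩
      rintro ⟨N, z⟩ hy
      rw [mem_FBall_iff] at hy
      obtain ⟨k, hk, h, u, hb⟩ := hy
      subst h
      rw [castTup_rfl] at hb
      show ‖z‖ ≤ ‖a‖ + r
      have h2 : ‖simConj (u : Mat (k * n)) (ampTup k a)‖ ≤ ‖a‖ := by
        rw [norm_simConj_unitary _ u.2]
        exact norm_ampTup_le a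
      calc ‖z‖ = ‖(z - simConj (u : Mat (k * n)) (ampTup k a))
            + simConj (u : Mat (k * n)) (ampTup k a)‖ := by rw [sub_add_cancel]
        _ ≤ ‖z - simConj (u : Mat (k * n)) (ampTup k a)‖
            + ‖simConj (u : Mat (k * n)) (ampTup k a)‖ := norm_add_le _ _
        _ ≤ ‖a‖ + r := by linarith
  refine ⟨main1, ?_, ?_⟩
  · -- finer than free
    rintro J δ ⟨n, a⟩ hx
    have hxa : ‖matPolyEval δ a‖ < 1 := hx
    set D := ‖matPolyEval δ a‖ with hD
    have hDpos : 0 < 1 - D := by linarith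
    have hR : (0:ℝ) ≤ ‖a‖ + 1 := by positivity
    obtain ⟨C, hC, HC⟩ := matPolyEval_lip δ (‖a‖ + 1) hR
    set ε := min 1 ((1 - D) / (2 * (C + 1))) with hε
    have hεpos : 0 < ε := lt_min one_pos (div_pos hDpos (by linarith))
    have hε1 : ε ≤ 1 := min_le_left _ _
    have hε2 : ε ≤ (1 - D) / (2 * (C + 1)) := min_le_right _ _
    refine ⟨ε, hεpos, ?_⟩
    rintro ⟨N, z⟩ hz
    rw [mem_FBall_iff] at hz
    obtain ⟨k, hk, h, u, hb⟩ := hz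
    subst h
    rw [castTup_rfl] at hb
    show ‖matPolyEval δ z‖ < 1
    set x' := simConj (star (u : Mat (k * n))) z with hx'
    set A := ampTup k a with hA
    have hamp : simConj (star (u : Mat (k * n))) (simConj (u : Mat (k * n)) A) = A := by
      rw [simConj_comp, Matrix.mem_unitaryGroup_iff.mp u.2, simConj_one]
    have hzx' : z = simConj (u : Mat (k * n)) x' := by
      rw [hx', simConj_comp, Matrix.mem_unitaryGroup_iff'.mp u.2, simConj_one]
    have hx'A : ‖x' - A‖ < ε := by
      have : x' - A = simConj (star (u : Mat (k * n))) (z - simConj (u : Mat (k * n)) A) := by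
        rw [simConj_sub, hamp]
      rw [this, norm_simConj_unitary _ (star_mem_unitary _ u.2)]
      exact hb
    have hAR : ‖A‖ ≤ ‖a‖ + 1 := le_trans (norm_ampTup_le a) (by linarith)
    have hx'R : ‖x'‖ ≤ ‖a‖ + 1 := by
      calc ‖x'‖ = ‖(x' - A) + A‖ := by rw [sub_add_cancel]
        _ ≤ ‖x' - A‖ + ‖A‖ := norm_add_le _ _
        _ ≤ ε + ‖A‖ := by linarith
        _ ≤ 1 + ‖a‖ := by
            have hAa : ‖A‖ ≤ ‖a‖ := norm_ampTup_le (k := k) a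
            linarith
        _ = ‖a‖ + 1 := by ring
    have hlip : ‖matPolyEval δ x' - matPolyEval δ A‖ ≤ C * ‖x' - A‖ :=
      HC (k * n) x' A hx'R hAR
    have hampB : ‖matPolyEval δ A‖ ≤ D := by
      rw [hA, hD]
      exact norm_matPolyEval_amp δ k a
    have hCe : C * ‖x' - A‖ ≤ (1 - D) / 2 := by
      have h1 : C * ‖x' - A‖ ≤ (C + 1) * ε := by
        have : C * ‖x' - A‖ ≤ C * ε := mul_le_mul_of_nonneg_left (le_of_lt hx'A) hC
        nlinarith
      have h2 : (C + 1) * ε ≤ (C + 1) * ((1 - D) / (2 * (C + 1))) :=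
        mul_le_mul_of_nonneg_left hε2 (by linarith)
      have h3 : (C + 1) * ((1 - D) / (2 * (C + 1))) = (1 - D) / 2 := by
        field_simp
      linarith
    calc ‖matPolyEval δ z‖ = ‖matPolyEval δ x'‖ := by
          rw [hzx', norm_matPolyEval_simConj δ _ u.2]
      _ = ‖matPolyEval δ A + (matPolyEval δ x' - matPolyEval δ A)‖ := by
          rw [add_sub_cancel]
      _ ≤ ‖matPolyEval δ A‖ + ‖matPolyEval δ x' - matPolyEval δ A‖ := norm_add_le _ _
      _ ≤ D + (1 - D) / 2 := by linarith
      _ < 1 := by linarith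
  · -- coarser than fine
    intro U hU x hx
    obtain ⟨ε, hε, hsub⟩ := hU x hx
    obtain ⟨n, a⟩ := x
    exact ⟨FBall (⟨n, a⟩ : MSpace d) ε, (main1 n a ε hε).1, self_mem_FBall a hε, hsub⟩
end

section
/- Let a = (a^1, a^2, a^3) ∈ M_2^3 with a^1 = [[0,1],[0,0]], a^2 = [[1,0],[0,0]], a^3 = [[0,0],[1,0]]. Then there exists a 2×2 diagonal matrix δ of free polynomials in 3 variables such that a ∈ G_δ and, for every n and every x = (x^1,x^2,x^3) ∈ G_δ ∩ M_n^3, the spectra σ(x^1 + x^2 + x^3) and σ(−x^1 − x^3) are disjoint. -/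
open Matrix Filter Topology
open scoped Matrix.Norms.L2Operator Kronecker

section AuxFreeNbhd

open Matrix

noncomputable def pS : FreePoly 3 :=
  (4 : ℂ) • ((FreeAlgebra.ι ℂ 0 + FreeAlgebra.ι ℂ 1 + FreeAlgebra.ι ℂ 2) *
    (FreeAlgebra.ι ℂ 0 + FreeAlgebra.ι ℂ 1 + FreeAlgebra.ι ℂ 2) -
    (FreeAlgebra.ι ℂ 0 + FreeAlgebra.ι ℂ 1 + FreeAlgebra.ι ℂ 2) - 1)

noncomputable def pT : FreePoly 3 :=
  (4 : ℂ) • ((FreeAlgebra.ι ℂ 0 + FreeAlgebra.ι ℂ 2) *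
    (FreeAlgebra.ι ℂ 0 + FreeAlgebra.ι ℂ 2) - 1)

lemma polyEval_pS {n : ℕ} (x : MatTup 3 n) :
    polyEval pS x
      = (4:ℂ) • ((x 0 + x 1 + x 2) * (x 0 + x 1 + x 2) - (x 0 + x 1 + x 2) - 1) := by
  simp [polyEval, pS]

lemma polyEval_pT {n : ℕ} (x : MatTup 3 n) :
    polyEval pT x = (4:ℂ) • ((x 0 + x 2) * (x 0 + x 2) - 1) := by
  simp [polyEval, pT]

lemma exists_eigvec {n : ℕ} {A : Mat n} {μ : ℂ} (h : μ ∈ spectrum ℂ A) :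
    ∃ v : Fin n → ℂ, v ≠ 0 ∧ A.mulVec v = μ • v := by
  rw [spectrum.mem_iff, Matrix.isUnit_iff_isUnit_det, isUnit_iff_ne_zero, not_not] at h
  obtain ⟨v, hv0, hv⟩ := (Matrix.exists_mulVec_eq_zero_iff).mpr h
  refine ⟨v, hv0, ?_⟩
  rw [Matrix.sub_mulVec, Algebra.algebraMap_eq_smul_one, Matrix.smul_mulVec,
    Matrix.one_mulVec, sub_eq_zero] at hv
  exact hv.symm

lemma mem_spectrum_of_eigvec {n : ℕ} {M : Mat n} {μ : ℂ} {v : Fin n → ℂ} (hv0 : v ≠ 0)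
    (h : M.mulVec v = μ • v) : μ ∈ spectrum ℂ M := by
  rw [spectrum.mem_iff, Matrix.isUnit_iff_isUnit_det, isUnit_iff_ne_zero, not_not,
    ← Matrix.exists_mulVec_eq_zero_iff]
  exact ⟨v, hv0, by rw [Matrix.sub_mulVec, Algebra.algebraMap_eq_smul_one,
    Matrix.smul_mulVec, Matrix.one_mulVec, h, sub_self]⟩

lemma abs_le_norm {n : ℕ} {M : Mat n} {μ : ℂ} (h : μ ∈ spectrum ℂ M) : ‖μ‖ ≤ ‖M‖ := by
  obtain ⟨v, hv0, hv⟩ := exists_eigvec h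
  set w : EuclideanSpace ℂ (Fin n) := (EuclideanSpace.equiv (Fin n) ℂ).symm v with hw
  have hwp : (0:ℝ) < ‖w‖ := by simpa [hw, norm_pos_iff] using hv0
  have h1 := M.l2_opNorm_mulVec w
  rw [show (M *ᵥ (w : Fin n → ℂ)) = μ • (w : Fin n → ℂ) from hv] at h1
  have h2 : ‖μ‖ * ‖w‖ ≤ ‖M‖ * ‖w‖ := by simpa [norm_smul] using h1
  exact le_of_mul_le_mul_right h2 hwp

lemma mem_spectrum_matPolyEval {d J n : ℕ} (δ : Matrix (Fin J) (Fin J) (FreePoly d))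
    (hδ : ∀ i j, i ≠ j → δ i j = 0) (x : MatTup d n) (i : Fin J) {μ : ℂ}
    {v : Fin n → ℂ} (hv0 : v ≠ 0) (hv : (polyEval (δ i i) x).mulVec v = μ • v) :
    μ ∈ spectrum ℂ (matPolyEval δ x) := by
  classical
  set w : Fin (J * n) → ℂ :=
    fun p => if (finProdFinEquiv.symm p).1 = i then v (finProdFinEquiv.symm p).2 else 0 with hwdef
  have hwval : ∀ (j : Fin J) (t : Fin n),
      w (finProdFinEquiv (j, t)) = if j = i then v t else 0 := by
    intro j t
    rw [hwdef]
    simp only [Equiv.symm_apply_apply]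
  have hw0 : w ≠ 0 := by
    obtain ⟨t0, ht0⟩ := Function.ne_iff.mp hv0
    intro hcon
    apply ht0
    have h2 := congrFun hcon (finProdFinEquiv (i, t0))
    rw [hwval] at h2
    simpa using h2
  apply mem_spectrum_of_eigvec hw0
  funext p
  have hsum : ∀ f : Fin (J * n) → ℂ, ∑ q, f q = ∑ jt : Fin J × Fin n, f (finProdFinEquiv jt) :=
    fun f => (Equiv.sum_comp finProdFinEquiv f).symm
  have hMval : ∀ (j : Fin J) (t : Fin n),
      matPolyEval δ x p (finProdFinEquiv (j, t))
        = polyEval (δ (finProdFinEquiv.symm p).1 j) x (finProdFinEquiv.symm p).2 t := by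
    intro j t
    unfold matPolyEval
    simp only [Equiv.symm_apply_apply]
  have hterm : ∀ jt : Fin J × Fin n,
      matPolyEval δ x p (finProdFinEquiv jt) * w (finProdFinEquiv jt)
      = if jt.1 = i then
          polyEval (δ (finProdFinEquiv.symm p).1 i) x (finProdFinEquiv.symm p).2 jt.2 * v jt.2
        else 0 := by
    rintro ⟨j, t⟩
    rw [hMval, hwval]
    by_cases hj : j = i
    · rw [if_pos hj, if_pos hj, hj]
    · rw [if_neg hj, if_neg hj, mul_zero]
  rw [Matrix.mulVec, dotProduct, hsum,
    Finset.sum_congr rfl (fun jt _ => hterm jt), Fintype.sum_prod_type, Finset.sum_comm]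
  simp only [Finset.sum_ite_eq', Finset.mem_univ, if_true]
  have hwp : w p = if (finProdFinEquiv.symm p).1 = i then v (finProdFinEquiv.symm p).2 else 0 := by
    rw [hwdef]
  by_cases hp : (finProdFinEquiv.symm p).1 = i
  · rw [hp]
    have h3 := congrFun hv (finProdFinEquiv.symm p).2
    rw [Matrix.mulVec, dotProduct] at h3
    rw [h3]
    simp only [Pi.smul_apply, hwp, if_pos hp, smul_eq_mul]
  · have h0 : δ (finProdFinEquiv.symm p).1 i = 0 := hδ _ _ hp
    rw [h0]
    simp only [Pi.smul_apply, hwp, if_neg hp, smul_eq_mul, mul_zero, polyEval, map_zero,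
      Matrix.zero_apply, zero_mul, Finset.sum_const_zero]

lemma quad_mulVec {n : ℕ} (A : Mat n) (v : Fin n → ℂ) (lam : ℂ) (h : A.mulVec v = lam • v) :
    ((4:ℂ) • (A * A - A - 1)).mulVec v = (4 * (lam * lam - lam - 1)) • v := by
  have h2 : (A * A).mulVec v = (lam * lam) • v := by
    rw [← Matrix.mulVec_mulVec, h, Matrix.mulVec_smul, h, smul_smul]
  rw [Matrix.smul_mulVec, Matrix.sub_mulVec, Matrix.sub_mulVec, h2, h,
    Matrix.one_mulVec]
  funext t
  simp only [Pi.smul_apply, Pi.sub_apply, smul_eq_mul]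
  ring

lemma quad_mulVec' {n : ℕ} (A : Mat n) (v : Fin n → ℂ) (lam : ℂ) (h : A.mulVec v = lam • v) :
    ((4:ℂ) • (A * A - 1)).mulVec v = (4 * (lam * lam - 1)) • v := by
  have h2 : (A * A).mulVec v = (lam * lam) • v := by
    rw [← Matrix.mulVec_mulVec, h, Matrix.mulVec_smul, h, smul_smul]
  rw [Matrix.smul_mulVec, Matrix.sub_mulVec, h2, Matrix.one_mulVec]
  funext t
  simp only [Pi.smul_apply, Pi.sub_apply, smul_eq_mul]
  ring

end AuxFreeNbhd

/-- There is a diagonal `2 × 2` matrix `δ` of free polynomials in three variables such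
that the point `a` of Section 7 lies in `G_δ`, and at every point `x` of `G_δ` the
spectra `σ(x¹+x²+x³)` and `σ(-x¹-x³)` are disjoint. -/
theorem free_nbhd_with_disjoint_spectra :
    ∃ δ : Matrix (Fin 2) (Fin 2) (FreePoly 3),
      (∀ i j, i ≠ j → δ i j = 0) ∧
      (⟨2, ![!![0, 1; 0, 0], !![1, 0; 0, 0], !![0, 0; 1, 0]]⟩ : MSpace 3) ∈ GSet δ ∧
      ∀ (n : ℕ) (x : MatTup 3 n), (⟨n, x⟩ : MSpace 3) ∈ GSet δ →
        spectrum ℂ (x 0 + x 1 + x 2) ∩ spectrum ℂ (-(x 0) - x 2) = ∅ := by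
  classical
  set a : MatTup 3 2 := ![!![0, 1; 0, 0], !![1, 0; 0, 0], !![0, 0; 1, 0]] with ha
  set δ : Matrix (Fin 2) (Fin 2) (FreePoly 3) := !![pS, 0; 0, pT] with hδ
  have hδdiag : ∀ i j : Fin 2, i ≠ j → δ i j = 0 := by
    intro i j hij
    fin_cases i <;> fin_cases j <;> first | rfl | simp_all
  have hδ00 : δ 0 0 = pS := by simp [hδ]
  have hδ11 : δ 1 1 = pT := by simp [hδ]
  refine ⟨δ, hδdiag, ?_, ?_⟩
  · -- a ∈ GSet δ
    have hz : matPolyEval δ a = 0 := by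
      have key : ∀ i j : Fin 2, polyEval (δ i j) a = 0 := by
        intro i j
        rcases eq_or_ne i j with rfl | hij
        · fin_cases i
          · show polyEval (δ 0 0) a = 0
            rw [hδ00, polyEval_pS]
            have h0 : a 0 = !![0, 1; 0, 0] := rfl
            have h1 : a 1 = !![1, 0; 0, 0] := rfl
            have h2 : a 2 = !![0, 0; 1, 0] := rfl
            rw [h0, h1, h2]
            ext i j
            fin_cases i <;> fin_cases j <;>
              simp [Matrix.mul_apply, Fin.sum_univ_two, Matrix.one_apply]
          · show polyEval (δ 1 1) a = 0
            rw [hδ11, polyEval_pT]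
            have h0 : a 0 = !![0, 1; 0, 0] := rfl
            have h2 : a 2 = !![0, 0; 1, 0] := rfl
            rw [h0, h2]
            ext i j
            fin_cases i <;> fin_cases j <;>
              simp [Matrix.mul_apply, Fin.sum_univ_two, Matrix.one_apply]
        · rw [hδdiag i j hij]
          simp [polyEval]
      funext p q
      rw [show matPolyEval δ a p q = polyEval (δ (finProdFinEquiv.symm p).1
          (finProdFinEquiv.symm q).1) a (finProdFinEquiv.symm p).2 (finProdFinEquiv.symm q).2
          from rfl, key]
      rfl
    show ‖matPolyEval δ a‖ < 1
    rw [hz, norm_zero]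
    norm_num
  · intro n x hx
    have hx' : ‖matPolyEval δ x‖ < 1 := hx
    rw [Set.eq_empty_iff_forall_notMem]
    rintro lam ⟨h1, h2⟩
    obtain ⟨v, hv0, hv⟩ := exists_eigvec h1
    obtain ⟨u, hu0, hu⟩ := exists_eigvec h2
    have hPv : (polyEval (δ 0 0) x).mulVec v = (4 * (lam * lam - lam - 1)) • v := by
      rw [hδ00, polyEval_pS]
      exact quad_mulVec _ _ _ hv
    have hμ : (4 * (lam * lam - lam - 1)) ∈ spectrum ℂ (matPolyEval δ x) :=
      mem_spectrum_matPolyEval δ hδdiag x 0 hv0 hPv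
    have huT : (x 0 + x 2).mulVec u = (-lam) • u := by
      have h3 : (-(x 0) - x 2).mulVec u = lam • u := hu
      have h4 : (x 0 + x 2) = -(-(x 0) - x 2) := by abel
      rw [h4, Matrix.neg_mulVec, h3, neg_smul]
    have hQu : (polyEval (δ 1 1) x).mulVec u = (4 * (lam * lam - 1)) • u := by
      rw [hδ11, polyEval_pT]
      rw [quad_mulVec' (x 0 + x 2) u (-lam) huT]
      congr 1
      ring
    have hν : (4 * (lam * lam - 1)) ∈ spectrum ℂ (matPolyEval δ x) :=
      mem_spectrum_matPolyEval δ hδdiag x 1 hu0 hQu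
    have e1 : ‖lam * lam - lam - 1‖ < 1 / 4 := by
      have h5 := (abs_le_norm hμ).trans_lt hx'
      rw [norm_mul] at h5
      have h6 : ‖(4:ℂ)‖ = 4 := by norm_num
      rw [h6] at h5
      linarith
    have e2 : ‖lam * lam - 1‖ < 1 / 4 := by
      have h5 := (abs_le_norm hν).trans_lt hx'
      rw [norm_mul] at h5
      have h6 : ‖(4:ℂ)‖ = 4 := by norm_num
      rw [h6] at h5
      linarith
    have hl : ‖lam‖ ≤ ‖lam * lam - 1‖ + ‖lam * lam - lam - 1‖ := by
      calc ‖lam‖ = ‖(lam * lam - 1) - (lam * lam - lam - 1)‖ := by ring_nf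
        _ ≤ ‖lam * lam - 1‖ + ‖lam * lam - lam - 1‖ := norm_sub_le _ _
    have hone : (1:ℝ) ≤ ‖lam‖ * ‖lam‖ + ‖lam * lam - 1‖ := by
      calc (1:ℝ) = ‖(lam * lam) - (lam * lam - 1)‖ := by
            rw [show (lam * lam) - (lam * lam - 1) = 1 by ring, norm_one]
        _ ≤ ‖lam * lam‖ + ‖lam * lam - 1‖ := norm_sub_le _ _
        _ = ‖lam‖ * ‖lam‖ + ‖lam * lam - 1‖ := by rw [norm_mul]
    nlinarith [norm_nonneg lam, norm_nonneg (lam * lam - 1), norm_nonneg (lam * lam - lam - 1)]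
end
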